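/- Let P be the group presented by generators x, y, z and relators w₁ = z⁻¹x⁻¹yz⁻¹xz⁻¹yx⁻¹z⁻¹, w₂ = z⁻¹x⁻¹yz⁻¹yz⁻¹yx⁻¹z⁻¹x, w₃ = z⁻¹x⁻¹yz⁻¹yx⁻¹z⁻¹y, w₄ = zxy⁻¹zx⁻¹zy⁻¹xz, w₅ = zxy⁻¹zy⁻¹zy⁻¹xzx⁻¹, w₆ = zxy⁻¹zy⁻¹xzy⁻¹. Then there exists a group homomorphism ρ : P → SL(2,ℂ) with tr ρ(x) = −1, tr ρ(y) = 1 and tr ρ(z) = −1. -/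
import Mathlib


open Matrix

/-- `SL(2,ℂ)`. -/
abbrev SL2C := Matrix.SpecialLinearGroup (Fin 2) ℂ

/-- The trace of an element of `SL(2,ℂ)`. -/
noncomputable def trSL2 (A : SL2C) : ℂ := Matrix.trace (A : Matrix (Fin 2) (Fin 2) ℂ)

namespace T45Cover

/-- The free generators `x, y, z`. -/
def x : FreeGroup (Fin 3) := FreeGroup.of 0
def y : FreeGroup (Fin 3) := FreeGroup.of 1
def z : FreeGroup (Fin 3) := FreeGroup.of 2

/-- The six relators `w₁, …, w₆` of the presentation of `π₁(Σ₂T₄,₅)`. -/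
def rels : Set (FreeGroup (Fin 3)) :=
  { z⁻¹ * x⁻¹ * y * z⁻¹ * x * z⁻¹ * y * x⁻¹ * z⁻¹,
    z⁻¹ * x⁻¹ * y * z⁻¹ * y * z⁻¹ * y * x⁻¹ * z⁻¹ * x,
    z⁻¹ * x⁻¹ * y * z⁻¹ * y * x⁻¹ * z⁻¹ * y,
    z * x * y⁻¹ * z * x⁻¹ * z * y⁻¹ * x * z,
    z * x * y⁻¹ * z * y⁻¹ * z * y⁻¹ * x * z * x⁻¹,
    z * x * y⁻¹ * z * y⁻¹ * x * z * y⁻¹ }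

/-- The group `P = ⟨x, y, z ∣ w₁, …, w₆⟩`. -/
abbrev P := PresentedGroup rels

end T45Cover

namespace T45Proof

variable {a b : ℂ}

lemma mat2_eq {p q r s p' q' r' s' : ℂ} (h1 : p = p') (h2 : q = q') (h3 : r = r')
    (h4 : s = s') : !![p, q; r, s] = !![p', q'; r', s'] := by
  subst h1; subst h2; subst h3; subst h4; rfl

noncomputable def XX (a b : ℂ) (ha : a^2 = -3) (hb : b^2 = -15) : SL2C :=
  ⟨!![(-1+a)/2, 0; 0, (-1-a)/2], by rw [Matrix.det_fin_two_of]; linear_combination ((-1/4:ℂ)) * ha⟩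

noncomputable def XXi (a b : ℂ) (ha : a^2 = -3) (hb : b^2 = -15) : SL2C :=
  ⟨!![(-1-a)/2, 0; 0, (-1+a)/2], by rw [Matrix.det_fin_two_of]; linear_combination ((-1/4:ℂ)) * ha⟩

noncomputable def YY (a b : ℂ) (ha : a^2 = -3) (hb : b^2 = -15) : SL2C :=
  ⟨!![(3-a)/6, 1; -2/3, (3+a)/6], by rw [Matrix.det_fin_two_of]; linear_combination ((-1/36:ℂ)) * ha⟩

noncomputable def YYi (a b : ℂ) (ha : a^2 = -3) (hb : b^2 = -15) : SL2C :=
  ⟨!![(3+a)/6, -1; 2/3, (3-a)/6], by rw [Matrix.det_fin_two_of]; linear_combination ((-1/36:ℂ)) * ha⟩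

noncomputable def ZZ (a b : ℂ) (ha : a^2 = -3) (hb : b^2 = -15) : SL2C :=
  ⟨!![(-3+a)/6, (-1-b)/4; (1-b)/6, (-3-a)/6], by rw [Matrix.det_fin_two_of]; linear_combination ((-1/36:ℂ)) * ha + ((-1/24:ℂ)) * hb⟩

noncomputable def ZZi (a b : ℂ) (ha : a^2 = -3) (hb : b^2 = -15) : SL2C :=
  ⟨!![(-3-a)/6, (1+b)/4; (-1+b)/6, (-3+a)/6], by rw [Matrix.det_fin_two_of]; linear_combination ((-1/36:ℂ)) * ha + ((-1/24:ℂ)) * hb⟩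

lemma XX_inv (ha : a^2 = -3) (hb : b^2 = -15) : (XX a b ha hb)⁻¹ = XXi a b ha hb := by
  apply inv_eq_of_mul_eq_one_right
  apply Subtype.ext
  show (!![(-1+a)/2, 0; 0, (-1-a)/2] : Matrix (Fin 2) (Fin 2) ℂ) * !![(-1-a)/2, 0; 0, (-1+a)/2] = 1
  rw [Matrix.mul_fin_two, Matrix.one_fin_two]
  apply mat2_eq
  · linear_combination ((-1/4:ℂ)) * ha
  · linear_combination (0:ℂ) * ha
  · linear_combination (0:ℂ) * ha
  · linear_combination ((-1/4:ℂ)) * ha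

lemma YY_inv (ha : a^2 = -3) (hb : b^2 = -15) : (YY a b ha hb)⁻¹ = YYi a b ha hb := by
  apply inv_eq_of_mul_eq_one_right
  apply Subtype.ext
  show (!![(3-a)/6, 1; -2/3, (3+a)/6] : Matrix (Fin 2) (Fin 2) ℂ) * !![(3+a)/6, -1; 2/3, (3-a)/6] = 1
  rw [Matrix.mul_fin_two, Matrix.one_fin_two]
  apply mat2_eq
  · linear_combination ((-1/36:ℂ)) * ha
  · linear_combination (0:ℂ) * ha
  · linear_combination (0:ℂ) * ha
  · linear_combination ((-1/36:ℂ)) * ha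

lemma ZZ_inv (ha : a^2 = -3) (hb : b^2 = -15) : (ZZ a b ha hb)⁻¹ = ZZi a b ha hb := by
  apply inv_eq_of_mul_eq_one_right
  apply Subtype.ext
  show (!![(-3+a)/6, (-1-b)/4; (1-b)/6, (-3-a)/6] : Matrix (Fin 2) (Fin 2) ℂ) * !![(-3-a)/6, (1+b)/4; (-1+b)/6, (-3+a)/6] = 1
  rw [Matrix.mul_fin_two, Matrix.one_fin_two]
  apply mat2_eq
  · linear_combination ((-1/36:ℂ)) * ha + ((-1/24:ℂ)) * hb
  · linear_combination (0:ℂ) * ha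
  · linear_combination (0:ℂ) * ha
  · linear_combination ((-1/36:ℂ)) * ha + ((-1/24:ℂ)) * hb

lemma rel1 (ha : a^2 = -3) (hb : b^2 = -15) :
    ZZi a b ha hb * XXi a b ha hb * YY a b ha hb * ZZi a b ha hb * XX a b ha hb * ZZi a b ha hb * YY a b ha hb * XXi a b ha hb * ZZi a b ha hb = 1 := by
  apply Subtype.ext
  show (!![(-3-a)/6, (1+b)/4; (-1+b)/6, (-3+a)/6] : Matrix (Fin 2) (Fin 2) ℂ) * (!![(-1-a)/2, 0; 0, (-1+a)/2] : Matrix (Fin 2) (Fin 2) ℂ) * (!![(3-a)/6, 1; -2/3, (3+a)/6] : Matrix (Fin 2) (Fin 2) ℂ) * (!![(-3-a)/6, (1+b)/4; (-1+b)/6, (-3+a)/6] : Matrix (Fin 2) (Fin 2) ℂ) * (!![(-1+a)/2, 0; 0, (-1-a)/2] : Matrix (Fin 2) (Fin 2) ℂ) * (!![(-3-a)/6, (1+b)/4; (-1+b)/6, (-3+a)/6] : Matrix (Fin 2) (Fin 2) ℂ) * (!![(3-a)/6, 1; -2/3, (3+a)/6] : Matrix (Fin 2) (Fin 2) ℂ)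 * (!![(-1-a)/2, 0; 0, (-1+a)/2] : Matrix (Fin 2) (Fin 2) ℂ) * (!![(-3-a)/6, (1+b)/4; (-1+b)/6, (-3+a)/6] : Matrix (Fin 2) (Fin 2) ℂ) = 1
  simp only [Matrix.mul_fin_two]
  rw [Matrix.one_fin_two]
  apply mat2_eq
  · linear_combination ((-12499/41472:ℂ) + (251/41472:ℂ)*a + (6127/124416:ℂ)*a^2 + (1177/124416:ℂ)*a^3 + (-361/373248:ℂ)*a^4 + (-31/373248:ℂ)*a^5 + (7/373248:ℂ)*a^6 + (1/373248:ℂ)*a^7) * ha + ((-385/55296:ℂ) + (5/55296:ℂ)*b^2 + (-25/18432:ℂ)*a + (-1/55296:ℂ)*a*b^2 + (947/82944:ℂ)*a^2 + (-17/82944:ℂ)*a^2*b^2 + (-37/27648:ℂ)*a^3 + (1/9216:ℂ)*a^3*b^2 + (-1549/497664:ℂ)*a^4 + (1/55296:ℂ)*a^4*b^2 + (-125/165888:ℂ)*a^5 + (1/165888:ℂ)*a^5*b^2 + (5/124416:ℂ)*a^6 + (1/124416:ℂ)*a^7) * hb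
  · linear_combination ((17/6912:ℂ) + (-5/6912:ℂ)*b + (-41/5184:ℂ)*a^2 + (-37/10368:ℂ)*a^2*b + (53/62208:ℂ)*a^4 + (-7/20736:ℂ)*a^4*b + (-1/31104:ℂ)*a^6) * ha + ((-1/1152:ℂ) + (5/4608:ℂ)*b + (1/4608:ℂ)*b^2 + (11/6912:ℂ)*a^2 + (-7/6912:ℂ)*a^2*b + (-1/3456:ℂ)*a^2*b^2 + (1/20736:ℂ)*a^4 + (29/41472:ℂ)*a^4*b + (1/13824:ℂ)*a^4*b^2) * hb
  · linear_combination ((-17/10368:ℂ) + (-5/10368:ℂ)*b + (41/7776:ℂ)*a^2 + (-37/15552:ℂ)*a^2*b + (-53/93312:ℂ)*a^4 + (-7/31104:ℂ)*a^4*b + (1/46656:ℂ)*a^6) * ha + ((1/1728:ℂ) + (5/6912:ℂ)*b + (-1/6912:ℂ)*b^2 + (-11/10368:ℂ)*a^2 + (-7/10368:ℂ)*a^2*b + (1/5184:ℂ)*a^2*b^2 + (-1/31104:ℂ)*a^4 + (29/62208:ℂ)*a^4*b + (-1/20736:ℂ)*a^4*b^2) * hb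
  · linear_combination ((-12499/41472:ℂ) + (-251/41472:ℂ)*a + (6127/124416:ℂ)*a^2 + (-1177/124416:ℂ)*a^3 + (-361/373248:ℂ)*a^4 + (31/373248:ℂ)*a^5 + (7/373248:ℂ)*a^6 + (-1/373248:ℂ)*a^7) * ha + ((-385/55296:ℂ) + (5/55296:ℂ)*b^2 + (25/18432:ℂ)*a + (1/55296:ℂ)*a*b^2 + (947/82944:ℂ)*a^2 + (-17/82944:ℂ)*a^2*b^2 + (37/27648:ℂ)*a^3 + (-1/9216:ℂ)*a^3*b^2 + (-1549/497664:ℂ)*a^4 + (1/55296:ℂ)*a^4*b^2 + (125/165888:ℂ)*a^5 + (-1/165888:ℂ)*a^5*b^2 + (5/124416:ℂ)*a^6 + (-1/124416:ℂ)*a^7) * hb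

lemma rel2 (ha : a^2 = -3) (hb : b^2 = -15) :
    ZZi a b ha hb * XXi a b ha hb * YY a b ha hb * ZZi a b ha hb * YY a b ha hb * ZZi a b ha hb * YY a b ha hb * XXi a b ha hb * ZZi a b ha hb * XX a b ha hb = 1 := by
  apply Subtype.ext
  show (!![(-3-a)/6, (1+b)/4; (-1+b)/6, (-3+a)/6] : Matrix (Fin 2) (Fin 2) ℂ) * (!![(-1-a)/2, 0; 0, (-1+a)/2] : Matrix (Fin 2) (Fin 2) ℂ) * (!![(3-a)/6, 1; -2/3, (3+a)/6] : Matrix (Fin 2) (Fin 2) ℂ) * (!![(-3-a)/6, (1+b)/4; (-1+b)/6, (-3+a)/6] : Matrix (Fin 2) (Fin 2) ℂ) * (!![(3-a)/6, 1; -2/3, (3+a)/6] : Matrix (Fin 2) (Fin 2) ℂ) * (!![(-3-a)/6, (1+b)/4; (-1+b)/6, (-3+a)/6] : Matrix (Fin 2) (Fin 2) ℂ) * (!![(3-a)/6, 1; -2/3, (3+a)/6] : Matrix (Fin 2) (Fin 2) ℂ) * (!![(-1-a)/2, 0; 0, (-1+a)/2] : Matrix (Fin 2) (Fin 2) ℂ)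 * (!![(-3-a)/6, (1+b)/4; (-1+b)/6, (-3+a)/6] : Matrix (Fin 2) (Fin 2) ℂ) * (!![(-1+a)/2, 0; 0, (-1-a)/2] : Matrix (Fin 2) (Fin 2) ℂ) = 1
  simp only [Matrix.mul_fin_two]
  rw [Matrix.one_fin_two]
  apply mat2_eq
  · linear_combination ((-26459/82944:ℂ) + (1567/62208:ℂ)*a + (959/20736:ℂ)*a^2 + (-157/186624:ℂ)*a^3 + (-199/124416:ℂ)*a^4 + (1/559872:ℂ)*a^5 + (1/559872:ℂ)*a^6 + (-1/559872:ℂ)*a^7 + (-1/2239488:ℂ)*a^8) * ha + ((-107/36864:ℂ) + (-11/110592:ℂ)*b^2 + (-29/6912:ℂ)*a + (11/41472:ℂ)*a*b^2 + (1339/110592:ℂ)*a^2 + (-65/331776:ℂ)*a^2*b^2 + (-1/432:ℂ)*a^3 + (-1/124416:ℂ)*a^3*b^2 + (-997/331776:ℂ)*a^4 + (13/331776:ℂ)*a^4*b^2 + (7/41472:ℂ)*a^5 + (145/995328:ℂ)*a^6 + (-1/995328:ℂ)*a^6*b^2 + (-1/373248:ℂ)*a^7 + (-1/746496:ℂ)*a^8)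 * hb
  · linear_combination ((-31/10368:ℂ) + (-355/41472:ℂ)*b + (-31/10368:ℂ)*a + (-355/41472:ℂ)*a*b + (-425/124416:ℂ)*a^2 + (161/62208:ℂ)*a^2*b + (-425/124416:ℂ)*a^3 + (161/62208:ℂ)*a^3*b + (61/186624:ℂ)*a^4 + (-43/373248:ℂ)*a^4*b + (61/186624:ℂ)*a^5 + (-43/373248:ℂ)*a^5*b + (-1/124416:ℂ)*a^6 + (-1/124416:ℂ)*a^7) * ha + ((-1/6144:ℂ) + (55/27648:ℂ)*b + (11/55296:ℂ)*b^2 + (-1/6144:ℂ)*a + (55/27648:ℂ)*a*b + (11/55296:ℂ)*a*b^2 + (31/27648:ℂ)*a^2 + (-41/41472:ℂ)*a^2*b + (-17/82944:ℂ)*a^2*b^2 + (31/27648:ℂ)*a^3 + (-41/41472:ℂ)*a^3*b + (-17/82944:ℂ)*a^3*b^2 + (13/165888:ℂ)*a^4 + (7/248832:ℂ)*a^4*b + (1/165888:ℂ)*a^4*b^2 + (13/165888:ℂ)*a^5 + (7/248832:ℂ)*a^5*b + (1/165888:ℂ)*a^5*b^2 + (-1/124416:ℂ)*a^6 + (-1/124416:ℂ)*a^7)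 * hb
  · linear_combination ((31/15552:ℂ) + (-355/62208:ℂ)*b + (-31/15552:ℂ)*a + (355/62208:ℂ)*a*b + (425/186624:ℂ)*a^2 + (161/93312:ℂ)*a^2*b + (-425/186624:ℂ)*a^3 + (-161/93312:ℂ)*a^3*b + (-61/279936:ℂ)*a^4 + (-43/559872:ℂ)*a^4*b + (61/279936:ℂ)*a^5 + (43/559872:ℂ)*a^5*b + (1/186624:ℂ)*a^6 + (-1/186624:ℂ)*a^7) * ha + ((1/9216:ℂ) + (55/41472:ℂ)*b + (-11/82944:ℂ)*b^2 + (-1/9216:ℂ)*a + (-55/41472:ℂ)*a*b + (11/82944:ℂ)*a*b^2 + (-31/41472:ℂ)*a^2 + (-41/62208:ℂ)*a^2*b + (17/124416:ℂ)*a^2*b^2 + (31/41472:ℂ)*a^3 + (41/62208:ℂ)*a^3*b + (-17/124416:ℂ)*a^3*b^2 + (-13/248832:ℂ)*a^4 + (7/373248:ℂ)*a^4*b + (-1/248832:ℂ)*a^4*b^2 + (13/248832:ℂ)*a^5 + (-7/373248:ℂ)*a^5*b + (1/248832:ℂ)*a^5*b^2 + (1/186624:ℂ)*a^6 + (-1/186624:ℂ)*a^7)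 * hb
  · linear_combination ((-26459/82944:ℂ) + (-1567/62208:ℂ)*a + (959/20736:ℂ)*a^2 + (157/186624:ℂ)*a^3 + (-199/124416:ℂ)*a^4 + (-1/559872:ℂ)*a^5 + (1/559872:ℂ)*a^6 + (1/559872:ℂ)*a^7 + (-1/2239488:ℂ)*a^8) * ha + ((-107/36864:ℂ) + (-11/110592:ℂ)*b^2 + (29/6912:ℂ)*a + (-11/41472:ℂ)*a*b^2 + (1339/110592:ℂ)*a^2 + (-65/331776:ℂ)*a^2*b^2 + (1/432:ℂ)*a^3 + (1/124416:ℂ)*a^3*b^2 + (-997/331776:ℂ)*a^4 + (13/331776:ℂ)*a^4*b^2 + (-7/41472:ℂ)*a^5 + (145/995328:ℂ)*a^6 + (-1/995328:ℂ)*a^6*b^2 + (1/373248:ℂ)*a^7 + (-1/746496:ℂ)*a^8) * hb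

lemma rel3 (ha : a^2 = -3) (hb : b^2 = -15) :
    ZZi a b ha hb * XXi a b ha hb * YY a b ha hb * ZZi a b ha hb * YY a b ha hb * XXi a b ha hb * ZZi a b ha hb * YY a b ha hb = 1 := by
  apply Subtype.ext
  show (!![(-3-a)/6, (1+b)/4; (-1+b)/6, (-3+a)/6] : Matrix (Fin 2) (Fin 2) ℂ) * (!![(-1-a)/2, 0; 0, (-1+a)/2] : Matrix (Fin 2) (Fin 2) ℂ) * (!![(3-a)/6, 1; -2/3, (3+a)/6] : Matrix (Fin 2) (Fin 2) ℂ) * (!![(-3-a)/6, (1+b)/4; (-1+b)/6, (-3+a)/6] : Matrix (Fin 2) (Fin 2) ℂ) * (!![(3-a)/6, 1; -2/3, (3+a)/6] : Matrix (Fin 2) (Fin 2) ℂ) * (!![(-1-a)/2, 0; 0, (-1+a)/2] : Matrix (Fin 2) (Fin 2) ℂ) * (!![(-3-a)/6, (1+b)/4; (-1+b)/6, (-3+a)/6] : Matrix (Fin 2) (Fin 2) ℂ) * (!![(3-a)/6, 1; -2/3, (3+a)/6] : Matrix (Fin 2) (Fin 2) ℂ) = 1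
  simp only [Matrix.mul_fin_two]
  rw [Matrix.one_fin_two]
  apply mat2_eq
  · linear_combination ((-5597/20736:ℂ) + (7/3456:ℂ)*b + (11/3456:ℂ)*a + (1241/62208:ℂ)*a^2 + (-5/5184:ℂ)*a^2*b + (-7/15552:ℂ)*a^3 + (-71/186624:ℂ)*a^4 + (-1/31104:ℂ)*a^4*b + (1/93312:ℂ)*a^5 + (1/186624:ℂ)*a^6) * ha + ((-55/4608:ℂ) + (-11/6912:ℂ)*b + (-1/2304:ℂ)*a + (187/13824:ℂ)*a^2 + (17/10368:ℂ)*a^2*b + (-1/10368:ℂ)*a^3 + (-5/4608:ℂ)*a^4 + (-1/20736:ℂ)*a^4*b + (1/62208:ℂ)*a^5 + (1/124416:ℂ)*a^6) * hb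
  · linear_combination ((7/1536:ℂ) + (-7/4608:ℂ)*b + (109/13824:ℂ)*a + (-7/13824:ℂ)*a*b + (-133/20736:ℂ)*a^2 + (5/6912:ℂ)*a^2*b + (-7/2304:ℂ)*a^3 + (5/20736:ℂ)*a^3*b + (7/124416:ℂ)*a^4 + (1/41472:ℂ)*a^4*b + (5/124416:ℂ)*a^5 + (1/124416:ℂ)*a^5*b) * ha + ((-11/3072:ℂ) + (11/9216:ℂ)*b + (-19/9216:ℂ)*a + (11/27648:ℂ)*a*b + (59/13824:ℂ)*a^2 + (-17/13824:ℂ)*a^2*b + (17/13824:ℂ)*a^3 + (-17/41472:ℂ)*a^3*b + (7/82944:ℂ)*a^4 + (1/27648:ℂ)*a^4*b + (5/82944:ℂ)*a^5 + (1/82944:ℂ)*a^5*b) * hb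
  · linear_combination ((-7/2304:ℂ) + (-7/6912:ℂ)*b + (109/20736:ℂ)*a + (7/20736:ℂ)*a*b + (133/31104:ℂ)*a^2 + (5/10368:ℂ)*a^2*b + (-7/3456:ℂ)*a^3 + (-5/31104:ℂ)*a^3*b + (-7/186624:ℂ)*a^4 + (1/62208:ℂ)*a^4*b + (5/186624:ℂ)*a^5 + (-1/186624:ℂ)*a^5*b) * ha + ((11/4608:ℂ) + (11/13824:ℂ)*b + (-19/13824:ℂ)*a + (-11/41472:ℂ)*a*b + (-59/20736:ℂ)*a^2 + (-17/20736:ℂ)*a^2*b + (17/20736:ℂ)*a^3 + (17/62208:ℂ)*a^3*b + (-7/124416:ℂ)*a^4 + (1/41472:ℂ)*a^4*b + (5/124416:ℂ)*a^5 + (-1/124416:ℂ)*a^5*b) * hb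
  · linear_combination ((-5597/20736:ℂ) + (-7/3456:ℂ)*b + (-11/3456:ℂ)*a + (1241/62208:ℂ)*a^2 + (5/5184:ℂ)*a^2*b + (7/15552:ℂ)*a^3 + (-71/186624:ℂ)*a^4 + (1/31104:ℂ)*a^4*b + (-1/93312:ℂ)*a^5 + (1/186624:ℂ)*a^6) * ha + ((-55/4608:ℂ) + (11/6912:ℂ)*b + (1/2304:ℂ)*a + (187/13824:ℂ)*a^2 + (-17/10368:ℂ)*a^2*b + (1/10368:ℂ)*a^3 + (-5/4608:ℂ)*a^4 + (1/20736:ℂ)*a^4*b + (-1/62208:ℂ)*a^5 + (1/124416:ℂ)*a^6) * hb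

lemma rel4 (ha : a^2 = -3) (hb : b^2 = -15) :
    ZZ a b ha hb * XX a b ha hb * YYi a b ha hb * ZZ a b ha hb * XXi a b ha hb * ZZ a b ha hb * YYi a b ha hb * XX a b ha hb * ZZ a b ha hb = 1 := by
  apply Subtype.ext
  show (!![(-3+a)/6, (-1-b)/4; (1-b)/6, (-3-a)/6] : Matrix (Fin 2) (Fin 2) ℂ) * (!![(-1+a)/2, 0; 0, (-1-a)/2] : Matrix (Fin 2) (Fin 2) ℂ) * (!![(3+a)/6, -1; 2/3, (3-a)/6] : Matrix (Fin 2) (Fin 2) ℂ) * (!![(-3+a)/6, (-1-b)/4; (1-b)/6, (-3-a)/6] : Matrix (Fin 2) (Fin 2) ℂ) * (!![(-1-a)/2, 0; 0, (-1+a)/2] : Matrix (Fin 2) (Fin 2) ℂ) * (!![(-3+a)/6, (-1-b)/4; (1-b)/6, (-3-a)/6] : Matrix (Fin 2) (Fin 2) ℂ) * (!![(3+a)/6, -1; 2/3, (3-a)/6] : Matrix (Fin 2) (Fin 2) ℂ) * (!![(-1+a)/2, 0; 0, (-1-a)/2] : Matrix (Fin 2) (Fin 2) ℂ) * (!![(-3+a)/6,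 (-1-b)/4; (1-b)/6, (-3-a)/6] : Matrix (Fin 2) (Fin 2) ℂ) = 1
  simp only [Matrix.mul_fin_two]
  rw [Matrix.one_fin_two]
  apply mat2_eq
  · linear_combination ((-12499/41472:ℂ) + (-251/41472:ℂ)*a + (6127/124416:ℂ)*a^2 + (-1177/124416:ℂ)*a^3 + (-361/373248:ℂ)*a^4 + (31/373248:ℂ)*a^5 + (7/373248:ℂ)*a^6 + (-1/373248:ℂ)*a^7) * ha + ((-385/55296:ℂ) + (5/55296:ℂ)*b^2 + (25/18432:ℂ)*a + (1/55296:ℂ)*a*b^2 + (947/82944:ℂ)*a^2 + (-17/82944:ℂ)*a^2*b^2 + (37/27648:ℂ)*a^3 + (-1/9216:ℂ)*a^3*b^2 + (-1549/497664:ℂ)*a^4 + (1/55296:ℂ)*a^4*b^2 + (125/165888:ℂ)*a^5 + (-1/165888:ℂ)*a^5*b^2 + (5/124416:ℂ)*a^6 + (-1/124416:ℂ)*a^7) * hb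
  · linear_combination ((-17/6912:ℂ) + (5/6912:ℂ)*b + (41/5184:ℂ)*a^2 + (37/10368:ℂ)*a^2*b + (-53/62208:ℂ)*a^4 + (7/20736:ℂ)*a^4*b + (1/31104:ℂ)*a^6) * ha + ((1/1152:ℂ) + (-5/4608:ℂ)*b + (-1/4608:ℂ)*b^2 + (-11/6912:ℂ)*a^2 + (7/6912:ℂ)*a^2*b + (1/3456:ℂ)*a^2*b^2 + (-1/20736:ℂ)*a^4 + (-29/41472:ℂ)*a^4*b + (-1/13824:ℂ)*a^4*b^2) * hb
  · linear_combination ((17/10368:ℂ) + (5/10368:ℂ)*b + (-41/7776:ℂ)*a^2 + (37/15552:ℂ)*a^2*b + (53/93312:ℂ)*a^4 + (7/31104:ℂ)*a^4*b + (-1/46656:ℂ)*a^6) * ha + ((-1/1728:ℂ) + (-5/6912:ℂ)*b + (1/6912:ℂ)*b^2 + (11/10368:ℂ)*a^2 + (7/10368:ℂ)*a^2*b + (-1/5184:ℂ)*a^2*b^2 + (1/31104:ℂ)*a^4 + (-29/62208:ℂ)*a^4*b + (1/20736:ℂ)*a^4*b^2) * hb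
  · linear_combination ((-12499/41472:ℂ) + (251/41472:ℂ)*a + (6127/124416:ℂ)*a^2 + (1177/124416:ℂ)*a^3 + (-361/373248:ℂ)*a^4 + (-31/373248:ℂ)*a^5 + (7/373248:ℂ)*a^6 + (1/373248:ℂ)*a^7) * ha + ((-385/55296:ℂ) + (5/55296:ℂ)*b^2 + (-25/18432:ℂ)*a + (-1/55296:ℂ)*a*b^2 + (947/82944:ℂ)*a^2 + (-17/82944:ℂ)*a^2*b^2 + (-37/27648:ℂ)*a^3 + (1/9216:ℂ)*a^3*b^2 + (-1549/497664:ℂ)*a^4 + (1/55296:ℂ)*a^4*b^2 + (-125/165888:ℂ)*a^5 + (1/165888:ℂ)*a^5*b^2 + (5/124416:ℂ)*a^6 + (1/124416:ℂ)*a^7) * hb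

lemma rel5 (ha : a^2 = -3) (hb : b^2 = -15) :
    ZZ a b ha hb * XX a b ha hb * YYi a b ha hb * ZZ a b ha hb * YYi a b ha hb * ZZ a b ha hb * YYi a b ha hb * XX a b ha hb * ZZ a b ha hb * XXi a b ha hb = 1 := by
  apply Subtype.ext
  show (!![(-3+a)/6, (-1-b)/4; (1-b)/6, (-3-a)/6] : Matrix (Fin 2) (Fin 2) ℂ) * (!![(-1+a)/2, 0; 0, (-1-a)/2] : Matrix (Fin 2) (Fin 2) ℂ) * (!![(3+a)/6, -1; 2/3, (3-a)/6] : Matrix (Fin 2) (Fin 2) ℂ) * (!![(-3+a)/6, (-1-b)/4; (1-b)/6, (-3-a)/6] : Matrix (Fin 2) (Fin 2) ℂ) * (!![(3+a)/6, -1; 2/3, (3-a)/6] : Matrix (Fin 2) (Fin 2) ℂ) * (!![(-3+a)/6, (-1-b)/4; (1-b)/6, (-3-a)/6] : Matrix (Fin 2) (Fin 2) ℂ) * (!![(3+a)/6, -1; 2/3, (3-a)/6] : Matrix (Fin 2) (Fin 2) ℂ) * (!![(-1+a)/2, 0; 0, (-1-a)/2] : Matrix (Fin 2) (Fin 2) ℂ)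 * (!![(-3+a)/6, (-1-b)/4; (1-b)/6, (-3-a)/6] : Matrix (Fin 2) (Fin 2) ℂ) * (!![(-1-a)/2, 0; 0, (-1+a)/2] : Matrix (Fin 2) (Fin 2) ℂ) = 1
  simp only [Matrix.mul_fin_two]
  rw [Matrix.one_fin_two]
  apply mat2_eq
  · linear_combination ((-26459/82944:ℂ) + (-1567/62208:ℂ)*a + (959/20736:ℂ)*a^2 + (157/186624:ℂ)*a^3 + (-199/124416:ℂ)*a^4 + (-1/559872:ℂ)*a^5 + (1/559872:ℂ)*a^6 + (1/559872:ℂ)*a^7 + (-1/2239488:ℂ)*a^8) * ha + ((-107/36864:ℂ) + (-11/110592:ℂ)*b^2 + (29/6912:ℂ)*a + (-11/41472:ℂ)*a*b^2 + (1339/110592:ℂ)*a^2 + (-65/331776:ℂ)*a^2*b^2 + (1/432:ℂ)*a^3 + (1/124416:ℂ)*a^3*b^2 + (-997/331776:ℂ)*a^4 + (13/331776:ℂ)*a^4*b^2 + (-7/41472:ℂ)*a^5 + (145/995328:ℂ)*a^6 + (-1/995328:ℂ)*a^6*b^2 + (1/373248:ℂ)*a^7 + (-1/746496:ℂ)*a^8)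 * hb
  · linear_combination ((31/10368:ℂ) + (355/41472:ℂ)*b + (-31/10368:ℂ)*a + (-355/41472:ℂ)*a*b + (425/124416:ℂ)*a^2 + (-161/62208:ℂ)*a^2*b + (-425/124416:ℂ)*a^3 + (161/62208:ℂ)*a^3*b + (-61/186624:ℂ)*a^4 + (43/373248:ℂ)*a^4*b + (61/186624:ℂ)*a^5 + (-43/373248:ℂ)*a^5*b + (1/124416:ℂ)*a^6 + (-1/124416:ℂ)*a^7) * ha + ((1/6144:ℂ) + (-55/27648:ℂ)*b + (-11/55296:ℂ)*b^2 + (-1/6144:ℂ)*a + (55/27648:ℂ)*a*b + (11/55296:ℂ)*a*b^2 + (-31/27648:ℂ)*a^2 + (41/41472:ℂ)*a^2*b + (17/82944:ℂ)*a^2*b^2 + (31/27648:ℂ)*a^3 + (-41/41472:ℂ)*a^3*b + (-17/82944:ℂ)*a^3*b^2 + (-13/165888:ℂ)*a^4 + (-7/248832:ℂ)*a^4*b + (-1/165888:ℂ)*a^4*b^2 + (13/165888:ℂ)*a^5 + (7/248832:ℂ)*a^5*b + (1/165888:ℂ)*a^5*b^2 + (1/124416:ℂ)*a^6 + (-1/124416:ℂ)*a^7)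 * hb
  · linear_combination ((-31/15552:ℂ) + (355/62208:ℂ)*b + (-31/15552:ℂ)*a + (355/62208:ℂ)*a*b + (-425/186624:ℂ)*a^2 + (-161/93312:ℂ)*a^2*b + (-425/186624:ℂ)*a^3 + (-161/93312:ℂ)*a^3*b + (61/279936:ℂ)*a^4 + (43/559872:ℂ)*a^4*b + (61/279936:ℂ)*a^5 + (43/559872:ℂ)*a^5*b + (-1/186624:ℂ)*a^6 + (-1/186624:ℂ)*a^7) * ha + ((-1/9216:ℂ) + (-55/41472:ℂ)*b + (11/82944:ℂ)*b^2 + (-1/9216:ℂ)*a + (-55/41472:ℂ)*a*b + (11/82944:ℂ)*a*b^2 + (31/41472:ℂ)*a^2 + (41/62208:ℂ)*a^2*b + (-17/124416:ℂ)*a^2*b^2 + (31/41472:ℂ)*a^3 + (41/62208:ℂ)*a^3*b + (-17/124416:ℂ)*a^3*b^2 + (13/248832:ℂ)*a^4 + (-7/373248:ℂ)*a^4*b + (1/248832:ℂ)*a^4*b^2 + (13/248832:ℂ)*a^5 + (-7/373248:ℂ)*a^5*b + (1/248832:ℂ)*a^5*b^2 + (-1/186624:ℂ)*a^6 + (-1/186624:ℂ)*a^7)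 * hb
  · linear_combination ((-26459/82944:ℂ) + (1567/62208:ℂ)*a + (959/20736:ℂ)*a^2 + (-157/186624:ℂ)*a^3 + (-199/124416:ℂ)*a^4 + (1/559872:ℂ)*a^5 + (1/559872:ℂ)*a^6 + (-1/559872:ℂ)*a^7 + (-1/2239488:ℂ)*a^8) * ha + ((-107/36864:ℂ) + (-11/110592:ℂ)*b^2 + (-29/6912:ℂ)*a + (11/41472:ℂ)*a*b^2 + (1339/110592:ℂ)*a^2 + (-65/331776:ℂ)*a^2*b^2 + (-1/432:ℂ)*a^3 + (-1/124416:ℂ)*a^3*b^2 + (-997/331776:ℂ)*a^4 + (13/331776:ℂ)*a^4*b^2 + (7/41472:ℂ)*a^5 + (145/995328:ℂ)*a^6 + (-1/995328:ℂ)*a^6*b^2 + (-1/373248:ℂ)*a^7 + (-1/746496:ℂ)*a^8) * hb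

lemma rel6 (ha : a^2 = -3) (hb : b^2 = -15) :
    ZZ a b ha hb * XX a b ha hb * YYi a b ha hb * ZZ a b ha hb * YYi a b ha hb * XX a b ha hb * ZZ a b ha hb * YYi a b ha hb = 1 := by
  apply Subtype.ext
  show (!![(-3+a)/6, (-1-b)/4; (1-b)/6, (-3-a)/6] : Matrix (Fin 2) (Fin 2) ℂ) * (!![(-1+a)/2, 0; 0, (-1-a)/2] : Matrix (Fin 2) (Fin 2) ℂ) * (!![(3+a)/6, -1; 2/3, (3-a)/6] : Matrix (Fin 2) (Fin 2) ℂ) * (!![(-3+a)/6, (-1-b)/4; (1-b)/6, (-3-a)/6] : Matrix (Fin 2) (Fin 2) ℂ) * (!![(3+a)/6, -1; 2/3, (3-a)/6] : Matrix (Fin 2) (Fin 2) ℂ) * (!![(-1+a)/2, 0; 0, (-1-a)/2] : Matrix (Fin 2) (Fin 2) ℂ) * (!![(-3+a)/6, (-1-b)/4; (1-b)/6, (-3-a)/6] : Matrix (Fin 2) (Fin 2) ℂ) * (!![(3+a)/6, -1; 2/3, (3-a)/6] : Matrix (Fin 2) (Fin 2) ℂ) = 1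
  simp only [Matrix.mul_fin_two]
  rw [Matrix.one_fin_two]
  apply mat2_eq
  · linear_combination ((-5597/20736:ℂ) + (7/3456:ℂ)*b + (-11/3456:ℂ)*a + (1241/62208:ℂ)*a^2 + (-5/5184:ℂ)*a^2*b + (7/15552:ℂ)*a^3 + (-71/186624:ℂ)*a^4 + (-1/31104:ℂ)*a^4*b + (-1/93312:ℂ)*a^5 + (1/186624:ℂ)*a^6) * ha + ((-55/4608:ℂ) + (-11/6912:ℂ)*b + (1/2304:ℂ)*a + (187/13824:ℂ)*a^2 + (17/10368:ℂ)*a^2*b + (1/10368:ℂ)*a^3 + (-5/4608:ℂ)*a^4 + (-1/20736:ℂ)*a^4*b + (-1/62208:ℂ)*a^5 + (1/124416:ℂ)*a^6) * hb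
  · linear_combination ((-7/1536:ℂ) + (7/4608:ℂ)*b + (109/13824:ℂ)*a + (-7/13824:ℂ)*a*b + (133/20736:ℂ)*a^2 + (-5/6912:ℂ)*a^2*b + (-7/2304:ℂ)*a^3 + (5/20736:ℂ)*a^3*b + (-7/124416:ℂ)*a^4 + (-1/41472:ℂ)*a^4*b + (5/124416:ℂ)*a^5 + (1/124416:ℂ)*a^5*b) * ha + ((11/3072:ℂ) + (-11/9216:ℂ)*b + (-19/9216:ℂ)*a + (11/27648:ℂ)*a*b + (-59/13824:ℂ)*a^2 + (17/13824:ℂ)*a^2*b + (17/13824:ℂ)*a^3 + (-17/41472:ℂ)*a^3*b + (-7/82944:ℂ)*a^4 + (-1/27648:ℂ)*a^4*b + (5/82944:ℂ)*a^5 + (1/82944:ℂ)*a^5*b) * hb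
  · linear_combination ((7/2304:ℂ) + (7/6912:ℂ)*b + (109/20736:ℂ)*a + (7/20736:ℂ)*a*b + (-133/31104:ℂ)*a^2 + (-5/10368:ℂ)*a^2*b + (-7/3456:ℂ)*a^3 + (-5/31104:ℂ)*a^3*b + (7/186624:ℂ)*a^4 + (-1/62208:ℂ)*a^4*b + (5/186624:ℂ)*a^5 + (-1/186624:ℂ)*a^5*b) * ha + ((-11/4608:ℂ) + (-11/13824:ℂ)*b + (-19/13824:ℂ)*a + (-11/41472:ℂ)*a*b + (59/20736:ℂ)*a^2 + (17/20736:ℂ)*a^2*b + (17/20736:ℂ)*a^3 + (17/62208:ℂ)*a^3*b + (7/124416:ℂ)*a^4 + (-1/41472:ℂ)*a^4*b + (5/124416:ℂ)*a^5 + (-1/124416:ℂ)*a^5*b) * hb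
  · linear_combination ((-5597/20736:ℂ) + (-7/3456:ℂ)*b + (11/3456:ℂ)*a + (1241/62208:ℂ)*a^2 + (5/5184:ℂ)*a^2*b + (-7/15552:ℂ)*a^3 + (-71/186624:ℂ)*a^4 + (1/31104:ℂ)*a^4*b + (1/93312:ℂ)*a^5 + (1/186624:ℂ)*a^6) * ha + ((-55/4608:ℂ) + (11/6912:ℂ)*b + (-1/2304:ℂ)*a + (187/13824:ℂ)*a^2 + (-17/10368:ℂ)*a^2*b + (-1/10368:ℂ)*a^3 + (-5/4608:ℂ)*a^4 + (1/20736:ℂ)*a^4*b + (1/62208:ℂ)*a^5 + (1/124416:ℂ)*a^6) * hb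

end T45Proof

/-- There is a representation `ρ : P → SL(2,ℂ)` with `tr ρ(x) = −1`, `tr ρ(y) = 1`,
`tr ρ(z) = −1`. -/
theorem stmt1 :
    ∃ ρ : T45Cover.P →* SL2C,
      trSL2 (ρ (PresentedGroup.of 0)) = -1 ∧
      trSL2 (ρ (PresentedGroup.of 1)) = 1 ∧
      trSL2 (ρ (PresentedGroup.of 2)) = -1 := by
  set a : ℂ := Complex.I * Real.sqrt 3 with hadef
  set b : ℂ := Complex.I * Real.sqrt 15 with hbdef
  have ha : a^2 = -3 := by
    rw [hadef, mul_pow, Complex.I_sq]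
    rw [← Complex.ofReal_pow, Real.sq_sqrt (by norm_num : (3:ℝ) ≥ 0)]
    norm_num
  have hb : b^2 = -15 := by
    rw [hbdef, mul_pow, Complex.I_sq]
    rw [← Complex.ofReal_pow, Real.sq_sqrt (by norm_num : (15:ℝ) ≥ 0)]
    norm_num
  set f : Fin 3 → SL2C := ![T45Proof.XX a b ha hb, T45Proof.YY a b ha hb, T45Proof.ZZ a b ha hb]
    with hf
  have hrels : ∀ r ∈ T45Cover.rels, FreeGroup.lift f r = 1 := by
    intro r hr
    simp only [T45Cover.rels, Set.mem_insert_iff, Set.mem_singleton_iff] at hr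
    have hx : FreeGroup.lift f T45Cover.x = T45Proof.XX a b ha hb := by
      simp [T45Cover.x, hf]
    have hy : FreeGroup.lift f T45Cover.y = T45Proof.YY a b ha hb := by
      simp [T45Cover.y, hf]
    have hz : FreeGroup.lift f T45Cover.z = T45Proof.ZZ a b ha hb := by
      simp [T45Cover.z, hf]
    rcases hr with rfl | rfl | rfl | rfl | rfl | rfl <;>
      simp only [_root_.map_mul, _root_.map_inv, hx, hy, hz, T45Proof.XX_inv ha hb, T45Proof.YY_inv ha hb,
        T45Proof.ZZ_inv ha hb]
    · exact T45Proof.rel1 ha hb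
    · exact T45Proof.rel2 ha hb
    · exact T45Proof.rel3 ha hb
    · exact T45Proof.rel4 ha hb
    · exact T45Proof.rel5 ha hb
    · exact T45Proof.rel6 ha hb
  refine ⟨PresentedGroup.toGroup hrels, ?_, ?_, ?_⟩
  · rw [PresentedGroup.toGroup.of]
    show trSL2 (f 0) = -1
    simp only [hf, Matrix.cons_val_zero]
    show Matrix.trace (!![(-1+a)/2, 0; 0, (-1-a)/2] : Matrix (Fin 2) (Fin 2) ℂ) = -1
    rw [Matrix.trace_fin_two]
    simp only [Matrix.cons_val_zero, Matrix.cons_val_one, Matrix.head_cons, Matrix.cons_val',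
      Matrix.head_fin_const, Matrix.empty_val', Matrix.cons_val_fin_one, Matrix.of_apply]
    ring
  · rw [PresentedGroup.toGroup.of]
    show trSL2 (f 1) = 1
    simp only [hf, Matrix.cons_val_one, Matrix.head_cons]
    show Matrix.trace (!![(3-a)/6, 1; -2/3, (3+a)/6] : Matrix (Fin 2) (Fin 2) ℂ) = 1
    rw [Matrix.trace_fin_two]
    simp only [Matrix.cons_val_zero, Matrix.cons_val_one, Matrix.head_cons, Matrix.cons_val',
      Matrix.head_fin_const, Matrix.empty_val', Matrix.cons_val_fin_one, Matrix.of_apply]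
    ring
  · rw [PresentedGroup.toGroup.of]
    show trSL2 (f 2) = -1
    simp only [hf]
    show Matrix.trace (!![(-3+a)/6, (-1-b)/4; (1-b)/6, (-3-a)/6] : Matrix (Fin 2) (Fin 2) ℂ) = -1
    rw [Matrix.trace_fin_two]
    simp only [Matrix.cons_val_zero, Matrix.cons_val_one, Matrix.head_cons, Matrix.cons_val',
      Matrix.head_fin_const, Matrix.empty_val', Matrix.cons_val_fin_one, Matrix.of_apply]
    ring
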